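/- The function G(X, t, x_0, …, x_n) = Σ_{(j_0,…,j_n) ∈ {0,1}^{n+1}} (∏_{i=0}^n (X − x_i)^{1−j_i} x_i^{j_i}) · V(x_0 − j_0·t, …, x_n − j_n·t), viewed as a polynomial in the variables x_0, …, x_n, is antisymmetric: for any indices 0 ≤ k < l ≤ n, exchanging the variables x_k and x_l in G yields −G. -/

import Mathlib

open MvPolynomial

/-- The coefficient ring `ℤ[X,t]`, realized as polynomials in two variables. -/
abbrev A : Type := MvPolynomial (Fin 2) ℤ

/-- The variable `X` of `ℤ[X,t]`. -/
noncomputable def Xv : A := MvPolynomial.X 0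

/-- The variable `t` of `ℤ[X,t]`. -/
noncomputable def tv : A := MvPolynomial.X 1

/-- The polynomial
`G = Σ_{j ∈ {0,1}^{n+1}} (∏_i (X - x_i)^{1-j_i} x_i^{j_i}) · V(x_0 - j_0 t, …, x_n - j_n t)`,
regarded as a multivariate polynomial in `x_0, …, x_n` with coefficients in `ℤ[X,t]`. -/
noncomputable def G (n : ℕ) : MvPolynomial (Fin (n + 1)) A :=
  ∑ j : Fin (n + 1) → Fin 2,
    (∏ i : Fin (n + 1),
        (C Xv - X i) ^ (1 - (j i : ℕ)) * (X i) ^ ((j i : ℕ))) *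
      ∏ i : Fin (n + 1), ∏ k ∈ Finset.univ.filter (fun k => i < k),
        ((X i - (j i : ℕ) • C tv) - (X k - (j k : ℕ) • C tv))

lemma filter_eq_Ioi {n : ℕ} (i : Fin n) :
    Finset.univ.filter (fun k => i < k) = Finset.Ioi i := by
  ext; simp

/-- The (reversed) Vandermonde product is alternating. -/
lemma vand_perm {R : Type*} [CommRing R] {n : ℕ} (σ : Equiv.Perm (Fin n)) (y : Fin n → R) :
    (∏ i : Fin n, ∏ k ∈ Finset.univ.filter (fun k => i < k), (y (σ i) - y (σ k))) =
      (Equiv.Perm.sign σ : ℤ) •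
        ∏ i : Fin n, ∏ k ∈ Finset.univ.filter (fun k => i < k), (y i - y k) := by
  simp only [filter_eq_Ioi]
  have key : ∀ z : Fin n → R,
      (∏ i : Fin n, ∏ k ∈ Finset.Ioi i, (z i - z k)) =
        (∏ i : Fin n, ∏ k ∈ Finset.Ioi i, (-1 : R)) * (Matrix.vandermonde z).det := by
    intro z
    rw [Matrix.det_vandermonde, ← Finset.prod_mul_distrib]
    refine Finset.prod_congr rfl fun i _ => ?_
    rw [← Finset.prod_mul_distrib]
    refine Finset.prod_congr rfl fun k _ => by ring
  have hsub : Matrix.vandermonde (fun i => y (σ i)) =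
      (Matrix.vandermonde y).submatrix σ id := by
    ext i j; simp [Matrix.vandermonde]
  rw [key (fun i => y (σ i)), key y, hsub, Matrix.det_permute, zsmul_eq_mul]
  ring

theorem statement2 (n : ℕ) (k l : Fin (n + 1)) (hkl : k < l) :
    MvPolynomial.rename (Equiv.swap k l) (G n) = - G n := by
  set σ : Equiv.Perm (Fin (n + 1)) := Equiv.swap k l with hσ
  have hσσ : ∀ i, σ (σ i) = i := fun i => Equiv.swap_apply_self k l i
  have hsign : (Equiv.Perm.sign σ : ℤ) = -1 := by
    rw [hσ, Equiv.Perm.sign_swap hkl.ne]; rfl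
  unfold G
  rw [map_sum]
  have hterm : ∀ j : Fin (n + 1) → Fin 2,
      MvPolynomial.rename σ
        ((∏ i : Fin (n + 1), (C Xv - X i) ^ (1 - (j i : ℕ)) * (X i) ^ ((j i : ℕ))) *
          ∏ i : Fin (n + 1), ∏ k' ∈ Finset.univ.filter (fun k' => i < k'),
            ((X i - (j i : ℕ) • C tv) - (X k' - (j k' : ℕ) • C tv))) =
      -((∏ i : Fin (n + 1),
            (C Xv - X i) ^ (1 - (j (σ i) : ℕ)) * (X i) ^ ((j (σ i) : ℕ))) *
          ∏ i : Fin (n + 1), ∏ k' ∈ Finset.univ.filter (fun k' => i < k'),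
            ((X i - (j (σ i) : ℕ) • C tv) - (X k' - (j (σ k') : ℕ) • C tv))) := by
    intro j
    rw [map_mul, map_prod, map_prod]
    have h1 : (∏ i : Fin (n + 1),
        MvPolynomial.rename σ ((C Xv - X i) ^ (1 - (j i : ℕ)) * (X i) ^ ((j i : ℕ)))) =
        ∏ i : Fin (n + 1),
          (C Xv - X i) ^ (1 - (j (σ i) : ℕ)) * (X i) ^ ((j (σ i) : ℕ)) := by
      rw [← Equiv.prod_comp σ
        (fun i => (C Xv - X i) ^ (1 - (j (σ i) : ℕ)) * (X i) ^ ((j (σ i) : ℕ)))]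
      refine Finset.prod_congr rfl fun i _ => ?_
      simp [hσσ, rename_C]
    have h2 : (∏ i : Fin (n + 1),
        MvPolynomial.rename σ (∏ k' ∈ Finset.univ.filter (fun k' => i < k'),
          ((X i - (j i : ℕ) • C tv) - (X k' - (j k' : ℕ) • C tv)))) =
        -∏ i : Fin (n + 1), ∏ k' ∈ Finset.univ.filter (fun k' => i < k'),
          ((X i - (j (σ i) : ℕ) • C tv) - (X k' - (j (σ k') : ℕ) • C tv)) := by
      have : (∏ i : Fin (n + 1),
          MvPolynomial.rename σ (∏ k' ∈ Finset.univ.filter (fun k' => i < k'),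
            ((X i - (j i : ℕ) • C tv) - (X k' - (j k' : ℕ) • C tv)))) =
          ∏ i : Fin (n + 1), ∏ k' ∈ Finset.univ.filter (fun k' => i < k'),
            (((fun m => X m - (j (σ m) : ℕ) • C tv) (σ i)) -
             ((fun m => X m - (j (σ m) : ℕ) • C tv) (σ k'))) := by
        refine Finset.prod_congr rfl fun i _ => ?_
        rw [map_prod]
        refine Finset.prod_congr rfl fun k' _ => ?_
        simp [hσσ, rename_C]
      rw [this, vand_perm σ (fun m => X m - (j (σ m) : ℕ) • C tv), hsign]
      simp
    rw [h1, h2]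
    ring
  rw [Finset.sum_congr rfl fun j _ => hterm j, Finset.sum_neg_distrib]
  refine congrArg Neg.neg ?_
  have e : (Fin (n + 1) → Fin 2) ≃ (Fin (n + 1) → Fin 2) :=
    Equiv.arrowCongr σ (Equiv.refl (Fin 2))
  refine Fintype.sum_bijective (fun j => j ∘ σ)
    ((Equiv.arrowCongr σ.symm (Equiv.refl (Fin 2))).bijective) _ _ fun j => ?_
  rfl
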